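/- Let n ≥ 4 and let H(q,p) = ½Σ_{i=1}^n p_i² + Σ_{i=1}^{n−1} e^{q_i − q_{i+1}} + e^{q_{n−1}+q_n} + e^{−q_1} + e^{−2q_1} on ℝ^{2n}. If (q(t), p(t)) solves Hamilton's equations q̇_i = ∂H/∂p_i, ṗ_i = −∂H/∂q_i, then the functions a_i = ½e^{(q_i − q_{i+1})/2} (i = 1, …, n−1), a_n = ½e^{(q_{n−1}+q_n)/2}, a_{n+1} = (1/√2)e^{−q_1/2}, b_i = −½p_i (i = 1, …, n) satisfy: ȧ_i = a_i(b_{i+1} − b_i) for i = 1, …, n−1; ȧ_n = −a_n(b_{n−1} + b_n); ȧ_{n+1} = a_{n+1} b_1; ḃ_1 = 2a_1² − a_{n+1}² − 4a_{n+1}⁴; ḃ_i = 2(a_i² − a_{i−1}²) for i = 2, …, n−2 and i = n; ḃ_{n−1} = 2(a_n² + a_{n−1}² − a_{n−2}²). -/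

import Mathlib

/-- The Kozlov–Treshchev Hamiltonian
`H(q,p) = ½Σ_{i=1}^n p_i² + Σ_{i=1}^{n−1} e^{q_i−q_{i+1}} + e^{q_{n−1}+q_n} + e^{−q_1}
 + e^{−2q_1}` on `ℝ^{2n}` (coordinates indexed `1, …, n`). -/
noncomputable def KTHam (n : ℕ) : (ℕ → ℝ) → (ℕ → ℝ) → ℝ := fun q p =>
  (1 / 2) * ∑ i ∈ Finset.Icc 1 n, (p i) ^ 2
    + ∑ i ∈ Finset.Icc 1 (n - 1), Real.exp (q i - q (i + 1))
    + Real.exp (q (n - 1) + q n) + Real.exp (-q 1) + Real.exp (-2 * q 1)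

lemma KTH1 (u : ℝ) : ((1:ℝ)/2 * Real.exp (u/2))^2 = (1/4) * Real.exp u := by
  rw [mul_pow, pow_two (Real.exp (u/2)), ← Real.exp_add, add_halves]; norm_num

lemma KTH2 (u : ℝ) : ((1:ℝ)/Real.sqrt 2 * Real.exp (u/2))^2 = (1/2) * Real.exp u := by
  rw [mul_pow, pow_two (Real.exp (u/2)), ← Real.exp_add, add_halves, div_pow,
    Real.sq_sqrt (by norm_num : (0:ℝ) ≤ 2), one_pow]

lemma KTH4 (u : ℝ) : ((1:ℝ)/Real.sqrt 2 * Real.exp (u/2))^4 = (1/4) * Real.exp (u + u) := by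
  have h : ((1:ℝ)/Real.sqrt 2 * Real.exp (u/2))^4
      = (((1:ℝ)/Real.sqrt 2 * Real.exp (u/2))^2)^2 := by ring
  rw [h, KTH2, mul_pow, pow_two (Real.exp u), ← Real.exp_add]; norm_num

lemma KT_derivP (n : ℕ) (Q P : ℕ → ℝ) (j : ℕ) (hj : j ∈ Finset.Icc 1 n) :
    deriv (fun x => KTHam n Q (Function.update P j x)) (P j) = P j := by
  have hsum : ∀ x : ℝ, ∑ i ∈ Finset.Icc 1 n, (Function.update P j x i) ^ 2
      = x ^ 2 + ∑ i ∈ (Finset.Icc 1 n).erase j, (P i) ^ 2 := by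
    intro x
    rw [← Finset.add_sum_erase _ _ hj, Function.update_self]
    congr 1
    exact Finset.sum_congr rfl fun i hi => by
      rw [Function.update_of_ne (Finset.ne_of_mem_erase hi)]
  have H : HasDerivAt (fun x : ℝ => KTHam n Q (Function.update P j x)) (P j) (P j) := by
    simp only [KTHam, hsum]
    have h := (((((hasDerivAt_pow 2 (P j)).add_const
        (∑ i ∈ (Finset.Icc 1 n).erase j, (P i) ^ 2)).const_mul ((1:ℝ)/2)).add_const
        (∑ i ∈ Finset.Icc 1 (n-1), Real.exp (Q i - Q (i+1)))).add_const
        (Real.exp (Q (n-1) + Q n))).add_const (Real.exp (-Q 1)) |>.add_const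
        (Real.exp (-2 * Q 1))
    refine h.congr_deriv ?_
    push_cast; ring
  exact H.deriv

lemma KT_derivQ (n : ℕ) (Q P : ℕ → ℝ) (j : ℕ) (hj : j ∈ Finset.Icc 1 n) :
    deriv (fun x => KTHam n (Function.update Q j x) P) (Q j) =
      (if j ≤ n - 1 then Real.exp (Q j - Q (j + 1)) else 0)
      - (if 2 ≤ j then Real.exp (Q (j - 1) - Q j) else 0)
      + (if n - 1 ≤ j then Real.exp (Q (n - 1) + Q n) else 0)
      + (if j = 1 then -Real.exp (-Q 1) - 2 * Real.exp (-2 * Q 1) else 0) := by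
  rw [Finset.mem_Icc] at hj
  obtain ⟨hj1, hjn⟩ := hj
  have hS : HasDerivAt (fun x => ∑ i ∈ Finset.Icc 1 (n-1),
      Real.exp (Function.update Q j x i - Function.update Q j x (i+1)))
      (∑ i ∈ Finset.Icc 1 (n-1),
        ((if i = j then Real.exp (Q i - Q (i+1)) else 0)
         - (if i = j - 1 then Real.exp (Q i - Q (i+1)) else 0))) (Q j) := by
    apply HasDerivAt.fun_sum
    intro i hi
    rw [Finset.mem_Icc] at hi
    by_cases hij : i = j
    · subst hij
      have h2 : i + 1 ≠ i := by omega
      have h3 : ¬ (i = i - 1) := by omega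
      simp only [Function.update_self, Function.update_of_ne h2, if_pos rfl, if_neg h3, sub_zero]
      have h := ((hasDerivAt_id' (x := Q i)).sub_const (Q (i+1))).exp
      refine h.congr_deriv ?_
      simp
      try ring
    · by_cases hij1 : i + 1 = j
      · subst hij1
        have h5 : i ≠ i + 1 := by omega
        have h6 : i = (i + 1) - 1 := by omega
        simp only [Function.update_of_ne h5, Function.update_self, if_neg h5, if_pos h6,
          zero_sub]
        have h := ((hasDerivAt_id' (x := Q (i+1))).const_sub (Q i)).exp
        refine h.congr_deriv ?_
        ring
      · have h4 : ¬ (i = j - 1) := by omega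
        simp only [Function.update_of_ne hij, Function.update_of_ne hij1, if_neg hij,
          if_neg h4, sub_zero, sub_self]
        exact hasDerivAt_const _ _
  have hT : HasDerivAt (fun x => Real.exp (Function.update Q j x (n-1) + Function.update Q j x n))
      ((if n - 1 = j then Real.exp (Q (n-1) + Q n) else 0)
        + (if n = j then Real.exp (Q (n-1) + Q n) else 0)) (Q j) := by
    by_cases h1 : n - 1 = j
    · have h2 : n ≠ n - 1 := by omega
      subst h1
      simp only [Function.update_self, Function.update_of_ne h2, if_pos rfl,
        if_neg h2, add_zero]
      have h := ((hasDerivAt_id' (x := Q (n-1))).add_const (Q n)).exp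
      refine h.congr_deriv ?_
      simp
      try ring
    · by_cases h2 : n = j
      · subst h2
        have h3 : n - 1 ≠ n := fun e => h1 e
        simp only [Function.update_self, Function.update_of_ne h3, if_neg h1, if_pos rfl,
          zero_add]
        have h := ((hasDerivAt_id' (x := Q n)).const_add (Q (n-1))).exp
        refine h.congr_deriv ?_
        simp
      · have h1' : n - 1 ≠ j := h1
        have h2' : n ≠ j := h2
        simp only [Function.update_of_ne h1', Function.update_of_ne h2', if_neg h1,
          if_neg h2, add_zero]
        exact hasDerivAt_const _ _
  have hU : HasDerivAt (fun x => Real.exp (-(Function.update Q j x 1)))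
      (if 1 = j then -Real.exp (-Q 1) else 0) (Q j) := by
    by_cases h : 1 = j
    · subst h
      simp only [Function.update_self, if_pos rfl]
      have hh := ((hasDerivAt_id' (x := Q 1)).neg).exp
      refine hh.congr_deriv ?_
      simp
      try ring
    · have h' : (1:ℕ) ≠ j := h
      simp only [Function.update_of_ne h', if_neg h]
      exact hasDerivAt_const _ _
  have hV : HasDerivAt (fun x => Real.exp (-2 * Function.update Q j x 1))
      (if 1 = j then -2 * Real.exp (-2 * Q 1) else 0) (Q j) := by
    by_cases h : 1 = j
    · subst h
      simp only [Function.update_self, if_pos rfl]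
      have hh := ((hasDerivAt_id' (x := Q 1)).const_mul (-2 : ℝ)).exp
      refine hh.congr_deriv ?_
      simp
      try ring
    · have h' : (1:ℕ) ≠ j := h
      simp only [Function.update_of_ne h', if_neg h]
      exact hasDerivAt_const _ _
  have H : HasDerivAt (fun x => KTHam n (Function.update Q j x) P)
      (0 + (∑ i ∈ Finset.Icc 1 (n-1),
        ((if i = j then Real.exp (Q i - Q (i+1)) else 0)
         - (if i = j - 1 then Real.exp (Q i - Q (i+1)) else 0)))
        + ((if n - 1 = j then Real.exp (Q (n-1) + Q n) else 0)
            + (if n = j then Real.exp (Q (n-1) + Q n) else 0))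
        + (if 1 = j then -Real.exp (-Q 1) else 0)
        + (if 1 = j then -2 * Real.exp (-2 * Q 1) else 0)) (Q j) := by
    simp only [KTHam]
    exact ((((hasDerivAt_const (Q j)
      ((1:ℝ)/2 * ∑ i ∈ Finset.Icc 1 n, (P i)^2)).add hS).add hT).add hU).add hV
  rw [H.deriv]
  rw [Finset.sum_sub_distrib, Finset.sum_ite_eq', Finset.sum_ite_eq']
  have g1 : (if j ∈ Finset.Icc 1 (n-1) then Real.exp (Q j - Q (j+1)) else 0)
      = (if j ≤ n - 1 then Real.exp (Q j - Q (j + 1)) else 0) := by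
    by_cases h : j ≤ n - 1
    · rw [if_pos (Finset.mem_Icc.mpr ⟨hj1, h⟩), if_pos h]
    · rw [if_neg (by rw [Finset.mem_Icc]; omega), if_neg h]
  have g2 : (if j - 1 ∈ Finset.Icc 1 (n-1) then Real.exp (Q (j-1) - Q (j-1+1)) else 0)
      = (if 2 ≤ j then Real.exp (Q (j - 1) - Q j) else 0) := by
    by_cases h : 2 ≤ j
    · have e : j - 1 + 1 = j := by omega
      rw [if_pos (Finset.mem_Icc.mpr ⟨by omega, by omega⟩), if_pos h, e]
    · rw [if_neg (by rw [Finset.mem_Icc]; omega), if_neg h]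
  have g3 : ((if n - 1 = j then Real.exp (Q (n-1) + Q n) else 0)
      + (if n = j then Real.exp (Q (n-1) + Q n) else 0))
      = (if n - 1 ≤ j then Real.exp (Q (n - 1) + Q n) else 0) := by
    by_cases h1 : n - 1 = j
    · have h2 : ¬ n = j := by omega
      rw [if_pos h1, if_neg h2, if_pos (by omega), add_zero]
    · by_cases h2 : n = j
      · rw [if_neg h1, if_pos h2, if_pos (by omega), zero_add]
      · rw [if_neg h1, if_neg h2, if_neg (by omega), add_zero]
  have g4 : ((if 1 = j then -Real.exp (-Q 1) else 0)
      + (if 1 = j then -2 * Real.exp (-2 * Q 1) else 0))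
      = (if j = 1 then -Real.exp (-Q 1) - 2 * Real.exp (-2 * Q 1) else 0) := by
    by_cases h : j = 1
    · rw [if_pos h.symm, if_pos h.symm, if_pos h]; ring
    · have h' : ¬ (1 = j) := fun e => h e.symm
      rw [if_neg h', if_neg h', if_neg h, add_zero]
  rw [zero_add, g1, g2, g3, add_assoc, g4]

/-- If `(q(t), p(t))` solves Hamilton's equations for the Kozlov–Treshchev
Hamiltonian (`n ≥ 4`), then the Flaschka-type variables
`a_i = ½e^{(q_i − q_{i+1})/2}` (`i = 1, …, n−1`), `a_n = ½e^{(q_{n−1}+q_n)/2}`,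
`a_{n+1} = (1/√2)e^{−q_1/2}`, `b_i = −½p_i` satisfy the Kozlov–Treshchev system in
Flaschka variables. -/
theorem KT_flaschka (n : ℕ) (hn : 4 ≤ n)
    (q p : ℝ → ℕ → ℝ)
    (hq : ∀ (t : ℝ), ∀ j ∈ Finset.Icc 1 n, HasDerivAt (fun s => q s j)
      (deriv (fun x => KTHam n (q t) (Function.update (p t) j x)) (p t j)) t)
    (hp : ∀ (t : ℝ), ∀ j ∈ Finset.Icc 1 n, HasDerivAt (fun s => p s j)
      (-(deriv (fun x => KTHam n (Function.update (q t) j x) (p t)) (q t j))) t)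
    (a b : ℝ → ℕ → ℝ)
    (ha : ∀ (t : ℝ), ∀ i ∈ Finset.Icc 1 (n - 1),
      a t i = (1 / 2) * Real.exp ((q t i - q t (i + 1)) / 2))
    (han : ∀ t : ℝ, a t n = (1 / 2) * Real.exp ((q t (n - 1) + q t n) / 2))
    (han1 : ∀ t : ℝ, a t (n + 1) = (1 / Real.sqrt 2) * Real.exp (-(q t 1) / 2))
    (hb : ∀ (t : ℝ), ∀ i ∈ Finset.Icc 1 n, b t i = -(1 / 2) * p t i) :
    (∀ (t : ℝ), ∀ i ∈ Finset.Icc 1 (n - 1),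
      HasDerivAt (fun s => a s i) (a t i * (b t (i + 1) - b t i)) t) ∧
    (∀ t : ℝ, HasDerivAt (fun s => a s n) (-(a t n * (b t (n - 1) + b t n))) t) ∧
    (∀ t : ℝ, HasDerivAt (fun s => a s (n + 1)) (a t (n + 1) * b t 1) t) ∧
    (∀ t : ℝ, HasDerivAt (fun s => b s 1)
      (2 * (a t 1) ^ 2 - (a t (n + 1)) ^ 2 - 4 * (a t (n + 1)) ^ 4) t) ∧
    (∀ (t : ℝ), ∀ i ∈ Finset.Icc 2 (n - 2),
      HasDerivAt (fun s => b s i) (2 * ((a t i) ^ 2 - (a t (i - 1)) ^ 2)) t) ∧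
    (∀ t : ℝ, HasDerivAt (fun s => b s n) (2 * ((a t n) ^ 2 - (a t (n - 1)) ^ 2)) t) ∧
    (∀ t : ℝ, HasDerivAt (fun s => b s (n - 1))
      (2 * ((a t n) ^ 2 + (a t (n - 1)) ^ 2 - (a t (n - 2)) ^ 2)) t) := by
  have hq' : ∀ (t : ℝ) (j : ℕ), 1 ≤ j → j ≤ n → HasDerivAt (fun s => q s j) (p t j) t := by
    intro t j h1 h2
    have hm : j ∈ Finset.Icc 1 n := Finset.mem_Icc.mpr ⟨h1, h2⟩
    have h := hq t j hm
    rwa [KT_derivP n (q t) (p t) j hm] at h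
  have hp' : ∀ (t : ℝ) (j : ℕ), 1 ≤ j → j ≤ n → HasDerivAt (fun s => p s j)
      (-((if j ≤ n - 1 then Real.exp (q t j - q t (j + 1)) else 0)
        - (if 2 ≤ j then Real.exp (q t (j - 1) - q t j) else 0)
        + (if n - 1 ≤ j then Real.exp (q t (n - 1) + q t n) else 0)
        + (if j = 1 then -Real.exp (-q t 1) - 2 * Real.exp (-2 * q t 1) else 0))) t := by
    intro t j h1 h2
    have hm : j ∈ Finset.Icc 1 n := Finset.mem_Icc.mpr ⟨h1, h2⟩
    have h := hp t j hm
    rwa [KT_derivQ n (q t) (p t) j hm] at h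
  have hbd : ∀ (t : ℝ) (j : ℕ), 1 ≤ j → j ≤ n → HasDerivAt (fun s => b s j)
      (-(1/2 : ℝ) * -((if j ≤ n - 1 then Real.exp (q t j - q t (j + 1)) else 0)
        - (if 2 ≤ j then Real.exp (q t (j - 1) - q t j) else 0)
        + (if n - 1 ≤ j then Real.exp (q t (n - 1) + q t n) else 0)
        + (if j = 1 then -Real.exp (-q t 1) - 2 * Real.exp (-2 * q t 1) else 0))) t := by
    intro t j h1 h2
    have hfun : (fun s => b s j) = (fun s => -(1/2 : ℝ) * p s j) :=
      funext fun s => hb s j (Finset.mem_Icc.mpr ⟨h1, h2⟩)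
    rw [hfun]
    exact (hp' t j h1 h2).const_mul (-(1/2 : ℝ))
  refine ⟨?_, ?_, ?_, ?_, ?_, ?_, ?_⟩
  · intro t i hi
    rw [Finset.mem_Icc] at hi
    obtain ⟨h1, h2⟩ := hi
    have hm : i ∈ Finset.Icc 1 (n-1) := Finset.mem_Icc.mpr ⟨h1, h2⟩
    have hfun : (fun s => a s i) = (fun s => (1/2 : ℝ) * Real.exp ((q s i - q s (i+1))/2)) :=
      funext fun s => ha s i hm
    have H := ((((hq' t i h1 (by omega)).sub (hq' t (i+1) (by omega)
      (by omega))).div_const 2).exp).const_mul ((1:ℝ)/2)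
    rw [hfun, ha t i hm, hb t i (Finset.mem_Icc.mpr ⟨h1, by omega⟩),
      hb t (i+1) (Finset.mem_Icc.mpr ⟨by omega, by omega⟩)]
    refine H.congr_deriv ?_
    simp only [Pi.sub_apply]
    ring
  · intro t
    have hfun : (fun s => a s n) = (fun s => (1/2 : ℝ) * Real.exp ((q s (n-1) + q s n)/2)) :=
      funext fun s => han s
    have H := ((((hq' t (n-1) (by omega) (by omega)).add (hq' t n (by omega)
      le_rfl)).div_const 2).exp).const_mul ((1:ℝ)/2)
    rw [hfun, han t, hb t (n-1) (Finset.mem_Icc.mpr ⟨by omega, by omega⟩),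
      hb t n (Finset.mem_Icc.mpr ⟨by omega, le_rfl⟩)]
    refine H.congr_deriv ?_
    simp only [Pi.add_apply]
    ring
  · intro t
    have hfun : (fun s => a s (n+1)) = (fun s => (1/Real.sqrt 2 : ℝ) * Real.exp (-(q s 1)/2)) :=
      funext fun s => han1 s
    have H := ((((hq' t 1 le_rfl (by omega)).neg).div_const 2).exp).const_mul ((1:ℝ)/Real.sqrt 2)
    rw [hfun, han1 t, hb t 1 (Finset.mem_Icc.mpr ⟨le_rfl, by omega⟩)]
    refine H.congr_deriv ?_
    simp only [Pi.neg_apply]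
    ring
  · intro t
    have H := hbd t 1 le_rfl (by omega)
    rw [if_pos (by omega : (1:ℕ) ≤ n - 1), if_neg (by omega : ¬ (2 ≤ (1:ℕ))),
      if_neg (by omega : ¬ (n - 1 ≤ 1)), if_pos (rfl : (1:ℕ) = 1)] at H
    rw [ha t 1 (Finset.mem_Icc.mpr ⟨le_rfl, by omega⟩), han1 t]
    refine H.congr_deriv ?_
    rw [KTH1, KTH2, KTH4]
    rw [show (-(q t 1) + -(q t 1)) = -2 * q t 1 by ring]
    ring
  · intro t i hi
    rw [Finset.mem_Icc] at hi
    obtain ⟨h1, h2⟩ := hi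
    have H := hbd t i (by omega) (by omega)
    rw [if_pos (by omega : i ≤ n - 1), if_pos h1,
      if_neg (by omega : ¬ (n - 1 ≤ i)), if_neg (by omega : ¬ (i = 1))] at H
    have e : i - 1 + 1 = i := by omega
    rw [ha t i (Finset.mem_Icc.mpr ⟨by omega, by omega⟩),
      ha t (i-1) (Finset.mem_Icc.mpr ⟨by omega, by omega⟩), e]
    refine H.congr_deriv ?_
    rw [KTH1, KTH1]
    ring
  · intro t
    have H := hbd t n (by omega) le_rfl
    rw [if_neg (by omega : ¬ (n ≤ n - 1)), if_pos (by omega : 2 ≤ n),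
      if_pos (by omega : n - 1 ≤ n), if_neg (by omega : ¬ (n = 1))] at H
    have e : n - 1 + 1 = n := by omega
    rw [han t, ha t (n-1) (Finset.mem_Icc.mpr ⟨by omega, le_rfl⟩), e]
    refine H.congr_deriv ?_
    rw [KTH1, KTH1]
    ring
  · intro t
    have H := hbd t (n-1) (by omega) (by omega)
    rw [if_pos (le_refl (n-1)), if_pos (by omega : 2 ≤ n - 1),
      if_pos (le_refl (n-1)), if_neg (by omega : ¬ (n - 1 = 1))] at H
    have e1 : n - 1 + 1 = n := by omega
    have e2 : n - 1 - 1 = n - 2 := by omega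
    have e3 : n - 2 + 1 = n - 1 := by omega
    rw [e1, e2] at H
    rw [han t, ha t (n-1) (Finset.mem_Icc.mpr ⟨by omega, le_rfl⟩),
      ha t (n-2) (Finset.mem_Icc.mpr ⟨by omega, by omega⟩), e1, e3]
    refine H.congr_deriv ?_
    rw [KTH1, KTH1, KTH1]
    ring
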